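/- Let w : Ω → (0,∞) be measurable with w ∈ L¹_loc(Ω) and w^{−s} ∈ L¹(Ω) for a continuous s : Ω̄ → (0,∞) with s(x) ≥ 1/(p(x)−1) for all x. Then for any compact K ⊆ Ω, the embedding L^{p(x)}(w,K) ↪ L¹(K) is continuous; that is, there exists c > 0 with ∫_K |u| dx ≤ c |u|_{L^{p(x)}(w,K)} for all u ∈ L^{p(x)}(w,K). -/

import Mathlib

open MeasureTheory Filter Topology

/-- The modular `ρ(u) = ∫_Ω w(x)|u(x)|^{p(x)} dx` on the weighted variable exponent
Lebesgue space. -/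
noncomputable def modular {N : ℕ} (Ω : Set (EuclideanSpace ℝ (Fin N)))
    (w p u : EuclideanSpace ℝ (Fin N) → ℝ) : ℝ :=
  ∫ x in Ω, w x * |u x| ^ p x

/-- The Luxemburg norm on the weighted variable exponent Lebesgue space `L^{p(x)}(w,Ω)`. -/
noncomputable def luxNorm {N : ℕ} (Ω : Set (EuclideanSpace ℝ (Fin N)))
    (w p u : EuclideanSpace ℝ (Fin N) → ℝ) : ℝ :=
  sInf {c : ℝ | 0 < c ∧ ∫ x in Ω, w x * |u x / c| ^ p x ≤ 1}

/-- Membership in `L^{p(x)}(w,Ω)`: `u` is a.e.-measurable with finite modular. -/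
def MemWLp {N : ℕ} (Ω : Set (EuclideanSpace ℝ (Fin N)))
    (w p u : EuclideanSpace ℝ (Fin N) → ℝ) : Prop :=
  AEMeasurable u (volume.restrict Ω) ∧
    Integrable (fun x => w x * |u x| ^ p x) (volume.restrict Ω)

/-- Pointwise Young-type inequality: `t ≤ w t^p + (1 + w^{-s})` when `w > 0`, `p > 1`,
`1/(p-1) ≤ s`. -/
lemma pt_ineq {wx t px sx : ℝ} (hw : 0 < wx) (ht : 0 ≤ t) (hp1 : 1 < px)
    (hsp : 1 / (px - 1) ≤ sx) :
    t ≤ wx * t ^ px + (1 + wx ^ (-sx)) := by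
  set e : ℝ := 1 / (px - 1) with he
  have hpm : 0 < px - 1 := by linarith
  have hnn : (0:ℝ) ≤ wx ^ (-sx) := Real.rpow_nonneg hw.le _
  have hb : wx ^ (-e) ≤ 1 + wx ^ (-sx) := by
    rcases le_total 1 wx with h1 | h1
    · have : wx ^ (-e) ≤ 1 := Real.rpow_le_one_of_one_le_of_nonpos h1 (by
        have : 0 < e := by positivity
        linarith)
      linarith
    · have : wx ^ (-e) ≤ wx ^ (-sx) :=
        Real.rpow_le_rpow_of_exponent_ge hw h1 (by linarith)
      linarith
  rcases le_or_gt t (wx ^ (-e)) with h | h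
  · have hnn2 : (0:ℝ) ≤ wx * t ^ px := by positivity
    linarith
  · have ht0 : 0 < t := (Real.rpow_nonneg hw.le _).trans_lt h
    have h2 : (wx ^ (-e)) ^ (px - 1) < t ^ (px - 1) :=
      Real.rpow_lt_rpow (Real.rpow_nonneg hw.le _) h hpm
    rw [← Real.rpow_mul hw.le] at h2
    have hexp : (-e) * (px - 1) = -1 := by
      rw [he]; field_simp
    rw [hexp, Real.rpow_neg_one] at h2
    have h3 : 1 < wx * t ^ (px - 1) := by
      have := mul_lt_mul_of_pos_left h2 hw
      rwa [mul_inv_cancel₀ hw.ne'] at this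
    have h4 : t ≤ wx * t ^ px := by
      calc t = t * 1 := (mul_one t).symm
        _ ≤ t * (wx * t ^ (px - 1)) := mul_le_mul_of_nonneg_left h3.le ht0.le
        _ = wx * (t ^ (1:ℝ) * t ^ (px - 1)) := by rw [Real.rpow_one]; ring
        _ = wx * t ^ ((1:ℝ) + (px - 1)) := by rw [Real.rpow_add ht0]
        _ = wx * t ^ px := by rw [show (1:ℝ) + (px - 1) = px by ring]
    have hnn3 : (0:ℝ) ≤ 1 + wx ^ (-sx) := by positivity
    linarith

theorem stmt17 {N : ℕ} (Ω : Set (EuclideanSpace ℝ (Fin N))) (hΩopen : IsOpen Ω)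
    (hΩbdd : Bornology.IsBounded Ω)
    (p s w : EuclideanSpace ℝ (Fin N) → ℝ)
    (hpcont : ContinuousOn p (closure Ω)) (hp : ∀ x ∈ closure Ω, 1 < p x)
    (hscont : ContinuousOn s (closure Ω)) (hs : ∀ x ∈ closure Ω, 0 < s x)
    (hsp : ∀ x ∈ closure Ω, 1 / (p x - 1) ≤ s x)
    (hwpos : ∀ᵐ x ∂(volume.restrict Ω), 0 < w x)
    (hwloc : LocallyIntegrableOn w Ω)
    (hws : Integrable (fun x => w x ^ (-(s x))) (volume.restrict Ω))
    (K : Set (EuclideanSpace ℝ (Fin N))) (hK : IsCompact K) (hKΩ : K ⊆ Ω) :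
    ∃ c : ℝ, 0 < c ∧ ∀ u : EuclideanSpace ℝ (Fin N) → ℝ,
      MemWLp K w p u → ∫ x in K, |u x| ≤ c * luxNorm K w p u := by
  have hKmeas : MeasurableSet K := hK.isClosed.measurableSet
  rcases K.eq_empty_or_nonempty with rfl | hKne
  · refine ⟨1, one_pos, fun u _ => ?_⟩
    have h1 : luxNorm (∅ : Set (EuclideanSpace ℝ (Fin N))) w p u = 0 := by
      unfold luxNorm
      have : {c : ℝ | 0 < c ∧ ∫ x in (∅ : Set (EuclideanSpace ℝ (Fin N))),
          w x * |u x / c| ^ p x ≤ 1} = Set.Ioi 0 := by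
        ext c; simp [Set.mem_Ioi]
      rw [this, csInf_Ioi]
    simp [h1]
  -- transfer a.e. facts to K
  have hres : volume.restrict K ≤ volume.restrict Ω := Measure.restrict_mono hKΩ le_rfl
  have hwposK : ∀ᵐ x ∂(volume.restrict K), 0 < w x := ae_mono hres hwpos
  have hmemK : ∀ᵐ x ∂(volume.restrict K), x ∈ K := ae_restrict_mem hKmeas
  have hKcl : K ⊆ closure Ω := hKΩ.trans subset_closure
  -- bound on p over closure Ω
  have hclcomp : IsCompact (closure Ω) := hΩbdd.isCompact_closure
  have hclne : (closure Ω).Nonempty := ⟨hKne.choose, hKcl hKne.choose_spec⟩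
  obtain ⟨x0, hx0, hx0max⟩ := hclcomp.exists_isMaxOn hclne hpcont
  set P : ℝ := p x0 with hP
  have hPub : ∀ x ∈ closure Ω, p x ≤ P := fun x hx => hx0max hx
  -- p is a.e. measurable on K
  have hpK : AEMeasurable p (volume.restrict K) :=
    (hpcont.mono hKcl).aemeasurable hKmeas
  have hKvol : volume K < ⊤ := hK.measure_lt_top
  -- w^{-s} integrable on K, with nonneg
  have hwsK : Integrable (fun x => w x ^ (-(s x))) (volume.restrict K) :=
    hws.mono_measure hres
  have hwsnonneg : ∀ᵐ x ∂(volume.restrict Ω), 0 ≤ w x ^ (-(s x)) := by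
    filter_upwards [hwpos] with x hx using Real.rpow_nonneg hx.le _
  have hwsintK : ∫ x in K, w x ^ (-(s x)) ≤ ∫ x in Ω, w x ^ (-(s x)) := by
    refine setIntegral_mono_set hws hwsnonneg hKΩ.eventuallyLE
  set C : ℝ := (volume K).toReal + (∫ x in Ω, w x ^ (-(s x))) + 1 with hC
  have hInteg_nonneg : 0 ≤ ∫ x in Ω, w x ^ (-(s x)) := integral_nonneg_of_ae hwsnonneg
  have hCpos : 0 < C := by
    have : (0:ℝ) ≤ (volume K).toReal := ENNReal.toReal_nonneg
    rw [hC]; linarith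
  refine ⟨C, hCpos, fun u hu => ?_⟩
  -- integrability of the scaled modular integrand
  have hint : ∀ c' : ℝ, 0 < c' →
      Integrable (fun x => w x * |u x / c'| ^ p x) (volume.restrict K) := by
    intro c' hc'
    have hrw : ∀ x, w x * |u x / c'| ^ p x
        = (w x * |u x| ^ p x) * c' ^ (-(p x)) := by
      intro x
      rw [abs_div, abs_of_pos hc', Real.div_rpow (abs_nonneg _) hc'.le,
        Real.rpow_neg hc'.le]
      ring
    set M : ℝ := max (c' ^ (-(1:ℝ))) (c' ^ (-P)) with hM
    have hMb : ∀ x ∈ K, c' ^ (-(p x)) ≤ M := by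
      intro x hx
      rcases le_total 1 c' with h1 | h1
      · exact le_max_of_le_left
          (Real.rpow_le_rpow_of_exponent_le h1 (by linarith [hp x (hKcl hx)]))
      · exact le_max_of_le_right
          (Real.rpow_le_rpow_of_exponent_ge hc' h1 (by linarith [hPub x (hKcl hx)]))
    have hmeas2 : AEMeasurable (fun x => c' ^ (-(p x))) (volume.restrict K) := by
      have : (fun x => c' ^ (-(p x)))
          = fun x => Real.exp (Real.log c' * (-(p x))) := by
        funext x; rw [Real.rpow_def_of_pos hc']
      rw [this]
      exact Real.measurable_exp.comp_aemeasurable ((hpK.neg).const_mul _)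
    have hasm : AEStronglyMeasurable (fun x => w x * |u x / c'| ^ p x)
        (volume.restrict K) := by
      simp only [hrw]
      exact (hu.2.aestronglyMeasurable.mul hmeas2.aestronglyMeasurable)
    refine Integrable.mono' (g := fun x => M * (w x * |u x| ^ p x))
      (hu.2.const_mul M) hasm ?_
    filter_upwards [hwposK, hmemK] with x hwx hxK
    rw [hrw, Real.norm_eq_abs, abs_of_nonneg (by positivity)]
    calc w x * |u x| ^ p x * c' ^ (-(p x))
        ≤ w x * |u x| ^ p x * M :=
          mul_le_mul_of_nonneg_left (hMb x hxK) (by positivity)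
      _ = M * (w x * |u x| ^ p x) := by ring
  -- key estimate: any admissible c' gives the bound
  have hkey : ∀ c' : ℝ, 0 < c' → (∫ x in K, w x * |u x / c'| ^ p x ≤ 1) →
      ∫ x in K, |u x| ≤ C * c' := by
    intro c' hc' hmod
    set v : EuclideanSpace ℝ (Fin N) → ℝ := fun x => u x / c' with hv
    have hg2 : Integrable (fun x => 1 + w x ^ (-(s x))) (volume.restrict K) :=
      (integrableOn_const (C := (1:ℝ)) hKvol.ne).add hwsK
    have hRHS : Integrable (fun x => w x * |v x| ^ p x + (1 + w x ^ (-(s x))))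
        (volume.restrict K) := (hint c' hc').add hg2
    have hptwise : ∀ᵐ x ∂(volume.restrict K),
        |v x| ≤ w x * |v x| ^ p x + (1 + w x ^ (-(s x))) := by
      filter_upwards [hwposK, hmemK] with x hwx hxK
      exact pt_ineq hwx (abs_nonneg _) (hp x (hKcl hxK)) (hsp x (hKcl hxK))
    have hvmeas : AEStronglyMeasurable (fun x => |v x|) (volume.restrict K) := by
      have h := (hu.1.div_const c').aestronglyMeasurable.norm
      simp only [Real.norm_eq_abs] at h
      exact h
    have hvint : Integrable (fun x => |v x|) (volume.restrict K) := by
      refine Integrable.mono' hRHS hvmeas ?_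
      filter_upwards [hptwise] with x hx
      rwa [Real.norm_eq_abs, abs_abs]
    have hvle : ∫ x in K, |v x| ≤ C := by
      calc ∫ x in K, |v x|
          ≤ ∫ x in K, (w x * |v x| ^ p x + (1 + w x ^ (-(s x)))) :=
            integral_mono_ae hvint hRHS hptwise
        _ = (∫ x in K, w x * |v x| ^ p x) + ∫ x in K, (1 + w x ^ (-(s x))) :=
            integral_add (hint c' hc') hg2
        _ = (∫ x in K, w x * |v x| ^ p x)
            + ((volume K).toReal + ∫ x in K, w x ^ (-(s x))) := by
            rw [integral_add (integrableOn_const (C := (1:ℝ)) hKvol.ne) hwsK]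
            simp [Measure.restrict_apply_univ, Measure.real]
        _ ≤ 1 + ((volume K).toReal + ∫ x in Ω, w x ^ (-(s x))) := by
            have := hmod; linarith [hwsintK]
        _ = C := by rw [hC]; ring
    have : ∫ x in K, |u x| = c' * ∫ x in K, |v x| := by
      rw [← integral_const_mul]
      congr 1; funext x
      rw [hv, abs_div, abs_of_pos hc', mul_div_cancel₀ _ hc'.ne']
    rw [this]
    calc c' * ∫ x in K, |v x| ≤ c' * C := mul_le_mul_of_nonneg_left hvle hc'.le
      _ = C * c' := mul_comm _ _
  -- the admissible set is nonempty
  set S : Set ℝ := {c : ℝ | 0 < c ∧ ∫ x in K, w x * |u x / c| ^ p x ≤ 1} with hS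
  have hSne : S.Nonempty := by
    set I : ℝ := ∫ x in K, w x * |u x| ^ p x with hI
    have hInn : 0 ≤ I := by
      refine integral_nonneg_of_ae ?_
      filter_upwards [hwposK] with x hx
      positivity
    set c0 : ℝ := max 1 (I + 1) with hc0
    have hc01 : (1:ℝ) ≤ c0 := le_max_left _ _
    have hc0pos : 0 < c0 := lt_of_lt_of_le one_pos hc01
    refine ⟨c0, hc0pos, ?_⟩
    have hb : ∀ᵐ x ∂(volume.restrict K),
        w x * |u x / c0| ^ p x ≤ (w x * |u x| ^ p x) * c0⁻¹ := by
      filter_upwards [hwposK, hmemK] with x hwx hxK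
      rw [abs_div, abs_of_pos hc0pos, Real.div_rpow (abs_nonneg _) hc0pos.le]
      have h1 : c0 ^ (-(p x)) ≤ c0 ^ (-(1:ℝ)) :=
        Real.rpow_le_rpow_of_exponent_le hc01 (by linarith [hp x (hKcl hxK)])
      rw [Real.rpow_neg_one] at h1
      calc w x * (|u x| ^ p x / c0 ^ p x)
          = (w x * |u x| ^ p x) * (c0 ^ p x)⁻¹ := by ring
        _ = (w x * |u x| ^ p x) * c0 ^ (-(p x)) := by rw [Real.rpow_neg hc0pos.le]
        _ ≤ (w x * |u x| ^ p x) * c0⁻¹ := mul_le_mul_of_nonneg_left h1 (by positivity)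
    calc ∫ x in K, w x * |u x / c0| ^ p x
        ≤ ∫ x in K, (w x * |u x| ^ p x) * c0⁻¹ :=
          integral_mono_ae (hint c0 hc0pos) (hu.2.mul_const _) hb
      _ = I * c0⁻¹ := by rw [integral_mul_const]
      _ ≤ 1 := by
          rw [mul_inv_le_iff₀ hc0pos, one_mul]
          calc I ≤ I + 1 := by linarith
            _ ≤ c0 := le_max_right _ _
  -- conclude
  have hfin : (∫ x in K, |u x|) / C ≤ sInf S := by
    refine le_csInf hSne fun c' hc' => ?_
    rw [div_le_iff₀ hCpos]
    have := hkey c' hc'.1 hc'.2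
    linarith
  have h2 : ∫ x in K, |u x| ≤ sInf S * C := (div_le_iff₀ hCpos).1 hfin
  unfold luxNorm
  rw [← hS]
  linarith
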